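/- Let X ∈ ℝ^{n₁×n₂} be such that XXᵀ is invertible, and let W = (XXᵀ)^{-1/2} denote the inverse of the positive semidefinite square root of XXᵀ. Then ‖W^{1/2}X‖_F² = ‖X‖_*, where W^{1/2} is the positive semidefinite square root of W. -/

import Mathlib

open Matrix
open scoped MatrixOrder

/-- The singular values of `X` (unordered). -/
noncomputable def singularValues {n₁ n₂ : ℕ} (X : Matrix (Fin n₁) (Fin n₂) ℝ) : Fin n₂ → ℝ :=
  fun i => Real.sqrt ((show (Xᵀ * X).IsHermitian by simpa using Matrix.isHermitian_conjTranspose_mul_self X).eigenvalues i)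

/-- The nuclear norm: sum of the singular values. -/
noncomputable def nuclearNorm {n₁ n₂ : ℕ} (X : Matrix (Fin n₁) (Fin n₂) ℝ) : ℝ :=
  ∑ i, singularValues X i

/-- The square of the Frobenius norm. -/
noncomputable def frobSq {n₁ n₂ : ℕ} (X : Matrix (Fin n₁) (Fin n₂) ℝ) : ℝ :=
  ∑ i, ∑ j, (X i j) ^ 2

/-- Trace of the psd square root equals the sum of square roots of eigenvalues. -/
lemma trace_sqrt_eq {n : ℕ} {A : Matrix (Fin n) (Fin n) ℝ} (hA : A.PosSemidef) :
    (CFC.sqrt A).trace = ∑ i, Real.sqrt (hA.1.eigenvalues i) := by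
  rw [CFC.sqrt_eq_cfc, cfc_nnreal_eq_real _ A, hA.1.cfc_eq, IsHermitian.cfc, Unitary.conjStarAlgAut_apply,
    Matrix.trace_mul_cycle]
  have h1 : (star hA.1.eigenvectorUnitary : Matrix (Fin n) (Fin n) ℝ) *
      (hA.1.eigenvectorUnitary : Matrix (Fin n) (Fin n) ℝ) = 1 :=
    hA.1.eigenvectorUnitary.2.1
  rw [h1, Matrix.one_mul, Matrix.trace_diagonal]
  simp [Real.coe_sqrt, Real.coe_toNNReal', max_eq_left (hA.eigenvalues_nonneg _)]

/-- If `X Xᵀ` is invertible, `S = (X Xᵀ)^{1/2}` is its psd square root,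
`W = S⁻¹ = (X Xᵀ)^{-1/2}`, and `R = W^{1/2}` is the psd square root of `W`,
then `‖W^{1/2} X‖_F² = ‖X‖_*`. -/
theorem frobSq_weighted_eq_nuclearNorm (n₁ n₂ : ℕ) (X : Matrix (Fin n₁) (Fin n₂) ℝ)
    (hinv : IsUnit (X * Xᵀ))
    (S : Matrix (Fin n₁) (Fin n₁) ℝ) (hS : S.PosSemidef) (hSS : S * S = X * Xᵀ)
    (R : Matrix (Fin n₁) (Fin n₁) ℝ) (hR : R.PosSemidef) (hRR : R * R = S⁻¹) :
    frobSq (R * X) = nuclearNorm X := by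
  classical
  have hXc : Xᴴ = Xᵀ := Matrix.conjTranspose_eq_transpose_of_trivial X
  have hdetS : IsUnit S.det := by
    have h := (Matrix.isUnit_iff_isUnit_det _).mp hinv
    rw [← hSS, Matrix.det_mul] at h
    exact isUnit_of_mul_isUnit_left h
  have hSinv : S⁻¹ * S = 1 := Matrix.nonsing_inv_mul S hdetS
  have hSinv' : S * S⁻¹ = 1 := Matrix.mul_nonsing_inv S hdetS
  set M := R * X with hMdef
  have hT : PosSemidef (Mᴴ * M) := Matrix.posSemidef_conjTranspose_mul_self M
  have hRh : Rᴴ = R := hR.1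
  have hTsq : (Mᴴ * M) ^ 2 = Xᴴ * X := by
    have hMh : Mᴴ = Xᴴ * R := by rw [hMdef, Matrix.conjTranspose_mul, hRh]
    rw [pow_two, hMh, hMdef, hXc]
    calc Xᵀ * R * (R * X) * (Xᵀ * R * (R * X))
        = Xᵀ * ((R * R) * ((X * Xᵀ) * (R * R))) * X := by
          simp only [Matrix.mul_assoc]
      _ = Xᵀ * (S⁻¹ * (S * (S * S⁻¹))) * X := by
          rw [hRR, ← hSS]; simp only [Matrix.mul_assoc]
      _ = Xᵀ * X := by rw [hSinv', Matrix.mul_one, hSinv, Matrix.mul_one]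
  have hHpsd : PosSemidef (Xᴴ * X) := Matrix.posSemidef_conjTranspose_mul_self X
  have hEq : Mᴴ * M = CFC.sqrt (Xᴴ * X) :=
    ((CFC.sqrt_eq_iff _ _ hHpsd.nonneg hT.nonneg).mpr (by rw [← sq]; exact hTsq)).symm
  have h1 : frobSq M = (Mᴴ * M).trace := by
    rw [frobSq, Matrix.trace]
    rw [Finset.sum_comm]
    simp [Matrix.mul_apply, Matrix.conjTranspose_apply, sq, Matrix.diag]
  rw [h1, hEq, trace_sqrt_eq hHpsd]
  rfl
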